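/- Let A and B be dual degenerate (n+1)-simplex configurations in R^n with common affine dependence coefficients α (all nonzero, ∑ α_i = 0, ∑ α_i A_i = 0 = ∑ α_i B_i). Let f(x)/x be the characteristic polynomial of C_2^T D C_1 and g(x)/x the characteristic polynomial of E_2^T D E_1 (matrices as defined from A, B, α). If the roots of f(x)/x are λ_1, ..., λ_n (with multiplicity, over C), then there exists a nonzero constant c such that the roots of g(x)/x are c/λ_1, ..., c/λ_n. In particular, for each 0 ≤ i ≤ n, the coefficient of x^i in f(x)/x vanishes if and only if the coefficient of x^{n-i} in g(x)/x vanishes. -/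

import Mathlib

open Finset Matrix Polynomial

lemma my_eval_charpoly {m : Type*} [Fintype m] [DecidableEq m] {K : Type*} [CommRing K]
    (M : Matrix m m K) (t : K) : M.charpoly.eval t = (t • (1 : Matrix m m K) - M).det := by
  rw [Matrix.charpoly, eval_det, matPolyEquiv_charmatrix]
  simp [Algebra.smul_def, algebraMap_eq_diagonal, Pi.algebraMap_def]


lemma my_det_identity {m : ℕ} {K : Type*} [Field K] (M N : Matrix (Fin m) (Fin m) K)
    (c : K) (hMN : M * N = c • 1) (x : K) :
    M.det * (x • (1 : Matrix (Fin m) (Fin m) K) - N).det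
      = (x • M - c • (1 : Matrix (Fin m) (Fin m) K)).det := by
  rw [← Matrix.det_mul]
  congr 1
  rw [Matrix.mul_sub, Matrix.mul_smul, Matrix.mul_one, hMN]


lemma my_det_expand {m : ℕ} {K : Type*} [Field K] (M : Matrix (Fin m) (Fin m) K)
    (c : K) (x : K) (hx : x ≠ 0) :
    (x • M - c • (1 : Matrix (Fin m) (Fin m) K)).det
      = (-1)^m * x^m * M.charpoly.eval (c / x) := by
  have h1 : x • M - c • (1 : Matrix (Fin m) (Fin m) K)
      = -(x • ((c/x) • (1 : Matrix (Fin m) (Fin m) K) - M)) := by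
    rw [smul_sub, smul_smul, mul_div_cancel₀ _ hx, neg_sub]
  rw [h1, Matrix.det_neg, Matrix.det_smul, Fintype.card_fin, my_eval_charpoly]
  ring

lemma my_coeff_aux {m : ℕ} (M N : Matrix (Fin m) (Fin m) ℝ) (c : ℝ) (hc : c ≠ 0)
    (hMN : M * N = c • 1) (hdM : M.det ≠ 0) :
    ∀ j : ℕ, j ≤ m → (N.charpoly.coeff j = 0 ↔ M.charpoly.coeff (m - j) = 0) := by
  have hdeg : M.charpoly.natDegree = m := by
    rw [Matrix.charpoly_natDegree_eq_dim, Fintype.card_fin]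
  have key : C M.det * N.charpoly
      = ∑ i ∈ Finset.range (m+1), C ((-1)^m * c^(m-i) * M.charpoly.coeff (m-i)) * X^i := by
    apply eq_of_infinite_eval_eq
    apply Set.Infinite.mono (s := {x : ℝ | x ≠ 0}) ?_ ?_
    · intro x hx
      have hx : x ≠ 0 := hx
      simp only [Set.mem_setOf_eq, eval_mul, eval_C, eval_finset_sum, eval_pow, eval_X]
      rw [my_eval_charpoly, my_det_identity M N c hMN x, my_det_expand M c x hx]
      rw [eval_eq_sum_range' (by omega : M.charpoly.natDegree < m + 1)]
      rw [← Finset.sum_range_reflect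
        (fun i => (-1)^m * c^(m-i) * M.charpoly.coeff (m-i) * x^i) (m+1)]
      rw [Finset.mul_sum]
      apply Finset.sum_congr rfl
      intro i hi
      have him : i ≤ m := Nat.lt_succ_iff.mp (Finset.mem_range.mp hi)
      have h1 : m + 1 - 1 - i = m - i := by omega
      have h2 : m - (m - i) = i := by omega
      rw [h1, h2, div_pow, pow_sub₀ x hx him]
      field_simp
    · exact Set.Finite.infinite_compl (Set.finite_singleton 0)
  intro j hj
  have hcoeff := congrArg (fun p => Polynomial.coeff p j) key
  simp only [coeff_C_mul, finset_sum_coeff, coeff_X_pow, mul_ite, mul_one, mul_zero] at hcoeff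
  rw [Finset.sum_ite_eq (Finset.range (m+1)) j
    (fun i => (-1)^m * c^(m-i) * M.charpoly.coeff (m-i)),
    if_pos (Finset.mem_range.mpr (by omega))] at hcoeff
  have h2 : M.det * N.charpoly.coeff j = 0 ↔ N.charpoly.coeff j = 0 := by
    simp [hdM]
  have h3 : (-1:ℝ)^m * c^(m-j) * M.charpoly.coeff (m-j) = 0
      ↔ M.charpoly.coeff (m-j) = 0 := by
    rw [mul_eq_zero, mul_eq_zero]
    have : ((-1:ℝ))^m ≠ 0 := pow_ne_zero _ (by norm_num)
    have : c^(m-j) ≠ 0 := pow_ne_zero _ hc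
    tauto
  rw [← h2, hcoeff, h3]

lemma my_roots_aux {m : ℕ} (M N : Matrix (Fin m) (Fin m) ℂ) (c : ℂ)
    (hMN : M * N = c • 1) (hdM : M.det ≠ 0) :
    N.charpoly.roots = M.charpoly.roots.map (fun l => c / l) := by
  have hdeg : M.charpoly.natDegree = m := by
    rw [Matrix.charpoly_natDegree_eq_dim, Fintype.card_fin]
  set q := M.charpoly with hqdef
  set s := q.roots with hsdef
  have hmono : q.Monic := M.charpoly_monic
  have hsplit : q.Splits := IsAlgClosed.splits q
  have hq : q = (s.map fun a => X - C a).prod :=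
    hsplit.eq_prod_roots_of_monic hmono
  have hcard : Multiset.card s = m := by
    rw [hsdef, ← hdeg]; exact (splits_iff_card_roots.mp hsplit)
  have heval0 : q.eval 0 = (-1)^m * M.det := by
    rw [hqdef, my_eval_charpoly, zero_smul, zero_sub, Matrix.det_neg, Fintype.card_fin]
  have hprod0 : q.eval 0 = (-1)^m * s.prod := by
    rw [hq, eval_multiset_prod, Multiset.map_map]
    have : ((fun p => eval 0 p) ∘ fun a => X - C a) = fun a : ℂ => -a := by
      funext a; simp
    rw [this, Multiset.prod_map_neg, hcard]
  have hdet : M.det = s.prod := by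
    have h := heval0.symm.trans hprod0
    have hne : ((-1 : ℂ))^m ≠ 0 := pow_ne_zero _ (by norm_num)
    exact mul_left_cancel₀ hne h
  have hz : ∀ l ∈ s, l ≠ 0 := by
    intro l hl hl0
    have : q.eval 0 = 0 := by
      rw [hl0] at hl
      exact (mem_roots (hmono.ne_zero)).mp hl
    rw [heval0] at this
    exact hdM (by
      rcases mul_eq_zero.mp this with h | h
      · exact absurd h (pow_ne_zero _ (by norm_num))
      · exact h)
  have key : C M.det * N.charpoly
      = C M.det * ((s.map fun l => c / l).map fun a => X - C a).prod := by
    apply eq_of_infinite_eval_eq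
    apply Set.Infinite.mono (s := {x : ℂ | x ≠ 0}) ?_ ?_
    · intro x hx
      have hx : x ≠ 0 := hx
      simp only [Set.mem_setOf_eq, eval_mul, eval_C]
      rw [my_eval_charpoly, my_det_identity M N c hMN x, my_det_expand M c x hx]
      rw [← hqdef, hq, eval_multiset_prod, Multiset.map_map, eval_multiset_prod,
        Multiset.map_map, Multiset.map_map]
      simp only [Function.comp_def, eval_sub, eval_X, eval_C]
      rw [hdet]
      have hconst : (-1:ℂ)^m * x^m = (Multiset.map (fun _ : ℂ => -x) s).prod := by
        rw [Multiset.map_const', Multiset.prod_replicate, hcard, neg_pow x m]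
      rw [hconst, ← Multiset.prod_map_mul]
      have hprodL : s.prod = (Multiset.map (fun l : ℂ => l) s).prod := by
        rw [Multiset.map_id']
      rw [hprodL, ← Multiset.prod_map_mul]
      apply congrArg Multiset.prod
      apply Multiset.map_congr rfl
      intro l hl
      have hlne : l ≠ 0 := hz l hl
      field_simp
      ring
    · exact Set.Finite.infinite_compl (Set.finite_singleton 0)
  have hCne : (C M.det : ℂ[X]) ≠ 0 := by simpa using hdM
  have hfinal := mul_left_cancel₀ hCne key
  rw [hfinal, roots_multiset_prod_X_sub_C]

lemma my_sum_dot {ι : Type*} [Fintype ι] {m : ℕ} (f : ι → Fin m → ℝ) (w : Fin m → ℝ) :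
    (∑ k, f k) ⬝ᵥ w = ∑ k, f k ⬝ᵥ w := by
  simp only [dotProduct, Finset.sum_apply, Finset.sum_mul]
  exact Finset.sum_comm

lemma my_unit (n : ℕ) (A : Fin (n+2) → Fin n → ℝ) (b e : Fin (n+2)) (hbe : b ≠ e)
    (hb : ∀ i : Fin n, (Fin.castAdd 2 i : Fin (n+2)) ≠ b)
    (he : ∀ i : Fin n, (Fin.castAdd 2 i : Fin (n+2)) ≠ e)
    (hA : AffineIndependent ℝ (fun j : {j : Fin (n + 2) // j ≠ e} => A j.val)) :
    IsUnit (Matrix.of fun i j => (A (Fin.castAdd 2 i) - A b) j) := by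
  rw [← Matrix.linearIndependent_rows_iff_isUnit]
  have h2 := (affineIndependent_iff_linearIndependent_vsub ℝ
    (fun j : {j : Fin (n + 2) // j ≠ e} => A j.val) ⟨b, hbe⟩).mp hA
  have hinj : Function.Injective
      (fun i : Fin n => (⟨⟨Fin.castAdd 2 i, he i⟩, by
        intro hcontra
        exact hb i (congrArg Subtype.val hcontra)⟩ :
        {x : {j : Fin (n+2) // j ≠ e} // x ≠ ⟨b, hbe⟩})) := by
    intro i i' h
    have := congrArg (fun x => x.val.val.val) h
    exact Fin.ext this
  have h3 := h2.comp _ hinj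
  convert h3 using 1 <;> rfl


/-- Duality of characteristic polynomials: if `M = C₂ᵀ D C₁` and `N = E₂ᵀ D E₁` come from
dual configurations `A`, `B` with common affine dependence coefficients `α`, then the
complex roots of the characteristic polynomial of `N` are `c/λ` for the roots `λ` of that
of `M` (for some nonzero constant `c`); in particular the `x^i` coefficient of one
vanishes iff the `x^{n-i}` coefficient of the other does. -/
theorem dual_characteristic_polynomial (n : ℕ) (hn : 2 ≤ n)
    (A B : Fin (n + 2) → (Fin n → ℝ))
    (hA : ∀ i : Fin (n + 2),
      AffineIndependent ℝ (fun j : {j : Fin (n + 2) // j ≠ i} => A j.val))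
    (hB : ∀ i : Fin (n + 2),
      AffineIndependent ℝ (fun j : {j : Fin (n + 2) // j ≠ i} => B j.val))
    (hdual : ∀ i j k l : Fin (n + 2), i ≠ j → i ≠ k → i ≠ l → j ≠ k → j ≠ l → k ≠ l →
      (A i - A j) ⬝ᵥ (B k - B l) = 0)
    (α : Fin (n + 2) → ℝ) (hα0 : ∀ i, α i ≠ 0) (hsum : ∑ i, α i = 0)
    (hdepA : ∑ i, α i • A i = 0) (hdepB : ∑ i, α i • B i = 0)
    (C₁ C₂ E₁ E₂ D M N : Matrix (Fin n) (Fin n) ℝ)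
    (hC₁ : C₁ = Matrix.of fun i j => (A (Fin.castAdd 2 i) - A ⟨n, by omega⟩) j)
    (hC₂ : C₂ = Matrix.of fun i j => (A (Fin.castAdd 2 i) - A (Fin.last (n + 1))) j)
    (hE₁ : E₁ = Matrix.of fun i j => (B (Fin.castAdd 2 i) - B ⟨n, by omega⟩) j)
    (hE₂ : E₂ = Matrix.of fun i j => (B (Fin.castAdd 2 i) - B (Fin.last (n + 1))) j)
    (hD : D = Matrix.diagonal fun i => α (Fin.castAdd 2 i))
    (hM : M = C₂ᵀ * D * C₁) (hN : N = E₂ᵀ * D * E₁) :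
    ∃ c : ℂ, c ≠ 0 ∧
      (N.charpoly.map (algebraMap ℝ ℂ)).roots
        = (M.charpoly.map (algebraMap ℝ ℂ)).roots.map (fun l => c / l) ∧
      ∀ i : ℕ, i ≤ n → (M.charpoly.coeff i = 0 ↔ N.charpoly.coeff (n - i) = 0) := by
  -- index abbreviations
  set an : Fin (n+2) := ⟨n, by omega⟩ with han
  set a1 : Fin (n+2) := Fin.last (n+1) with ha1
  have hana1 : an ≠ a1 := by
    intro h; have := congrArg Fin.val h; simp [han, ha1, Fin.last] at this
  have hcan : ∀ i : Fin n, (Fin.castAdd 2 i : Fin (n+2)) ≠ an := by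
    intro i h; have := congrArg Fin.val h; simp [han] at this; omega
  have hca1 : ∀ i : Fin n, (Fin.castAdd 2 i : Fin (n+2)) ≠ a1 := by
    intro i h; have := congrArg Fin.val h; simp [ha1, Fin.last] at this; omega
  have hcainj : ∀ i j : Fin n, i ≠ j → (Fin.castAdd 2 i : Fin (n+2)) ≠ Fin.castAdd 2 j := by
    intro i j hij h
    have hval := congrArg Fin.val h
    rw [Fin.coe_castAdd, Fin.coe_castAdd] at hval
    exact hij (Fin.ext hval)
  set z : Fin n := ⟨0, by omega⟩ with hz
  -- constants
  set δ₁ : ℝ := -(α a1 * ((A a1 - A an) ⬝ᵥ (B (Fin.castAdd 2 z) - B a1))) with hδ₁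
  set δ₂ : ℝ := -(α a1 * ((B a1 - B an) ⬝ᵥ (A (Fin.castAdd 2 z) - A a1))) with hδ₂
  -- the two diagonal identities
  have hdepA' : (∑ k, α k • (A k - A an)) = 0 := by
    have e : ∑ k, α k • (A k - A an) = (∑ k, α k • A k) - (∑ k, α k) • A an := by
      rw [Finset.sum_smul, ← Finset.sum_sub_distrib]
      exact Finset.sum_congr rfl fun k _ => smul_sub _ _ _
    rw [e, hdepA, hsum, zero_smul, sub_zero]
  have hdepB' : (∑ k, α k • (B k - B an)) = 0 := by
    have e : ∑ k, α k • (B k - B an) = (∑ k, α k • B k) - (∑ k, α k) • B an := by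
      rw [Finset.sum_smul, ← Finset.sum_sub_distrib]
      exact Finset.sum_congr rfl fun k _ => smul_sub _ _ _
    rw [e, hdepB, hsum, zero_smul, sub_zero]
  have hdotA : ∀ w : Fin n → ℝ, ∑ k, α k * ((A k - A an) ⬝ᵥ w) = 0 := by
    intro w
    have h0 := congrArg (fun v => v ⬝ᵥ w) hdepA'
    simp only [zero_dotProduct] at h0
    rw [my_sum_dot] at h0
    simpa [smul_dotProduct, smul_eq_mul] using h0
  have hdotB : ∀ w : Fin n → ℝ, ∑ k, α k * ((B k - B an) ⬝ᵥ w) = 0 := by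
    intro w
    have h0 := congrArg (fun v => v ⬝ᵥ w) hdepB'
    simp only [zero_dotProduct] at h0
    rw [my_sum_dot] at h0
    simpa [smul_dotProduct, smul_eq_mul] using h0
  have hent1 : ∀ i j : Fin n, (D * C₁ * E₂ᵀ) i j
      = α (Fin.castAdd 2 i) * ((A (Fin.castAdd 2 i) - A an) ⬝ᵥ (B (Fin.castAdd 2 j) - B a1)) := by
    intro i j
    rw [hD, hC₁, hE₂, Matrix.mul_apply]
    simp only [Matrix.diagonal_mul, Matrix.transpose_apply, Matrix.of_apply, Pi.sub_apply,
      dotProduct]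
    rw [Finset.mul_sum]
    exact Finset.sum_congr rfl fun k _ => by ring
  have hent2 : ∀ i j : Fin n, (D * E₁ * C₂ᵀ) i j
      = α (Fin.castAdd 2 i) * ((B (Fin.castAdd 2 i) - B an) ⬝ᵥ (A (Fin.castAdd 2 j) - A a1)) := by
    intro i j
    rw [hD, hE₁, hC₂, Matrix.mul_apply]
    simp only [Matrix.diagonal_mul, Matrix.transpose_apply, Matrix.of_apply, Pi.sub_apply,
      dotProduct]
    rw [Finset.mul_sum]
    exact Finset.sum_congr rfl fun k _ => by ring
  have h1 : D * C₁ * E₂ᵀ = δ₁ • 1 := by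
    ext i j
    rw [hent1 i j, Matrix.smul_apply, Matrix.one_apply]
    by_cases hij : i = j
    · subst hij
      rw [if_pos rfl, smul_eq_mul, mul_one]
      have hv := hdotA (B (Fin.castAdd 2 i) - B a1)
      have hsplit : ∑ k, α k * ((A k - A an) ⬝ᵥ (B (Fin.castAdd 2 i) - B a1))
          = α (Fin.castAdd 2 i) * ((A (Fin.castAdd 2 i) - A an) ⬝ᵥ (B (Fin.castAdd 2 i) - B a1))
            + α a1 * ((A a1 - A an) ⬝ᵥ (B (Fin.castAdd 2 i) - B a1)) := by
        refine ((Finset.sum_subset (Finset.subset_univ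
          ({Fin.castAdd 2 i, a1} : Finset (Fin (n+2)))) ?_).symm).trans
          (Finset.sum_pair (hca1 i))
        intro k _ hk
        simp only [Finset.mem_insert, Finset.mem_singleton] at hk
        push_neg at hk
        by_cases hkan : k = an
        · subst hkan; simp
        · rw [hdual k an (Fin.castAdd 2 i) a1 hkan hk.1 hk.2 (hcan i).symm hana1
            (hca1 i), mul_zero]
      have heq : (A a1 - A an) ⬝ᵥ (B (Fin.castAdd 2 i) - B a1)
          = (A a1 - A an) ⬝ᵥ (B (Fin.castAdd 2 z) - B a1) := by
        by_cases hiz : i = z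
        · rw [hiz]
        · have hd : (A a1 - A an) ⬝ᵥ (B (Fin.castAdd 2 i) - B (Fin.castAdd 2 z)) = 0 :=
            hdual a1 an (Fin.castAdd 2 i) (Fin.castAdd 2 z) hana1.symm (hca1 i).symm
              (hca1 z).symm (hcan i).symm (hcan z).symm (hcainj i z hiz)
          have hsum2 : B (Fin.castAdd 2 i) - B a1
              = (B (Fin.castAdd 2 i) - B (Fin.castAdd 2 z)) + (B (Fin.castAdd 2 z) - B a1) :=
            (sub_add_sub_cancel _ _ _).symm
          rw [hsum2, dotProduct_add, hd, zero_add]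
      rw [hsplit, heq] at hv
      rw [hδ₁]
      linarith
    · rw [if_neg hij, smul_eq_mul, mul_zero]
      rw [hdual (Fin.castAdd 2 i) an (Fin.castAdd 2 j) a1 (hcan i) (hcainj i j hij) (hca1 i)
        (hcan j).symm hana1 (hca1 j), mul_zero]
  have h2 : D * E₁ * C₂ᵀ = δ₂ • 1 := by
    ext i j
    rw [hent2 i j, Matrix.smul_apply, Matrix.one_apply]
    by_cases hij : i = j
    · subst hij
      rw [if_pos rfl, smul_eq_mul, mul_one]
      have hv := hdotB (A (Fin.castAdd 2 i) - A a1)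
      have hsplit : ∑ k, α k * ((B k - B an) ⬝ᵥ (A (Fin.castAdd 2 i) - A a1))
          = α (Fin.castAdd 2 i) * ((B (Fin.castAdd 2 i) - B an) ⬝ᵥ (A (Fin.castAdd 2 i) - A a1))
            + α a1 * ((B a1 - B an) ⬝ᵥ (A (Fin.castAdd 2 i) - A a1)) := by
        refine ((Finset.sum_subset (Finset.subset_univ
          ({Fin.castAdd 2 i, a1} : Finset (Fin (n+2)))) ?_).symm).trans
          (Finset.sum_pair (hca1 i))
        intro k _ hk
        simp only [Finset.mem_insert, Finset.mem_singleton] at hk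
        push_neg at hk
        by_cases hkan : k = an
        · subst hkan; simp
        · rw [dotProduct_comm, hdual (Fin.castAdd 2 i) a1 k an (hca1 i) hk.1.symm (hcan i)
            (fun h => hk.2 h.symm) hana1.symm hkan, mul_zero]
      have heq : (B a1 - B an) ⬝ᵥ (A (Fin.castAdd 2 i) - A a1)
          = (B a1 - B an) ⬝ᵥ (A (Fin.castAdd 2 z) - A a1) := by
        by_cases hiz : i = z
        · rw [hiz]
        · have hd : (B a1 - B an) ⬝ᵥ (A (Fin.castAdd 2 i) - A (Fin.castAdd 2 z)) = 0 := by
            rw [dotProduct_comm]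
            exact hdual (Fin.castAdd 2 i) (Fin.castAdd 2 z) a1 an (hcainj i z hiz) (hca1 i)
              (hcan i) (hca1 z) (hcan z) hana1.symm
          have hsum2 : A (Fin.castAdd 2 i) - A a1
              = (A (Fin.castAdd 2 i) - A (Fin.castAdd 2 z)) + (A (Fin.castAdd 2 z) - A a1) :=
            (sub_add_sub_cancel _ _ _).symm
          rw [hsum2, dotProduct_add, hd, zero_add]
      rw [hsplit, heq] at hv
      rw [hδ₂]
      linarith
    · rw [if_neg hij, smul_eq_mul, mul_zero]
      rw [dotProduct_comm, hdual (Fin.castAdd 2 j) a1 (Fin.castAdd 2 i) an (hca1 j)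
        (hcainj j i (fun h => hij h.symm)) (hcan j) (hca1 i).symm hana1.symm (hcan i), mul_zero]
  -- invertibility
  have hC₁u : IsUnit C₁ := by
    rw [hC₁]; exact my_unit n A an a1 hana1 hcan hca1 (hA a1)
  have hC₂u : IsUnit C₂ := by
    rw [hC₂]; exact my_unit n A a1 an hana1.symm hca1 hcan (hA an)
  have hE₁u : IsUnit E₁ := by
    rw [hE₁]; exact my_unit n B an a1 hana1 hcan hca1 (hB a1)
  have hE₂u : IsUnit E₂ := by
    rw [hE₂]; exact my_unit n B a1 an hana1.symm hca1 hcan (hB an)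
  have hDu : IsUnit D := by
    rw [Matrix.isUnit_iff_isUnit_det, hD, Matrix.det_diagonal, isUnit_iff_ne_zero]
    exact Finset.prod_ne_zero_iff.mpr fun i _ => hα0 _
  have hMu : IsUnit M := by
    rw [hM]; exact ((Matrix.isUnit_transpose C₂).mpr hC₂u |>.mul hDu).mul hC₁u
  have hNu : IsUnit N := by
    rw [hN]; exact ((Matrix.isUnit_transpose E₂).mpr hE₂u |>.mul hDu).mul hE₁u
  -- M N M = (δ₁ δ₂) M
  have hMNM : M * N * M = (δ₁ * δ₂) • M := by
    have e1 : M * N * M = C₂ᵀ * ((D * C₁ * E₂ᵀ) * ((D * E₁ * C₂ᵀ) * (D * C₁))) := by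
      rw [hM, hN]; simp only [Matrix.mul_assoc]
    rw [e1, h1, h2, Matrix.smul_mul, Matrix.smul_mul, Matrix.one_mul, Matrix.one_mul,
      Matrix.mul_smul, Matrix.mul_smul, smul_smul, hM, Matrix.mul_assoc]
  have hNMN : N * M * N = (δ₁ * δ₂) • N := by
    have e1 : N * M * N = E₂ᵀ * ((D * E₁ * C₂ᵀ) * ((D * C₁ * E₂ᵀ) * (D * E₁))) := by
      rw [hM, hN]; simp only [Matrix.mul_assoc]
    rw [e1, h2, h1, Matrix.smul_mul, Matrix.smul_mul, Matrix.one_mul, Matrix.one_mul,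
      Matrix.mul_smul, Matrix.mul_smul, smul_smul, mul_comm δ₂ δ₁, hN, Matrix.mul_assoc]
  set c0 : ℝ := δ₁ * δ₂ with hc0
  have hMN : M * N = c0 • 1 := by
    apply hMu.mul_right_cancel
    rw [hMNM, Matrix.smul_mul, Matrix.one_mul]
  have hNM : N * M = c0 • 1 := by
    apply hNu.mul_right_cancel
    rw [hNMN, Matrix.smul_mul, Matrix.one_mul]
  have hdM : M.det ≠ 0 := by
    rw [← isUnit_iff_ne_zero, ← Matrix.isUnit_iff_isUnit_det]; exact hMu
  have hdN : N.det ≠ 0 := by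
    rw [← isUnit_iff_ne_zero, ← Matrix.isUnit_iff_isUnit_det]; exact hNu
  have hc0 : c0 ≠ 0 := by
    intro h0
    have := congrArg Matrix.det hMN
    rw [Matrix.det_mul, h0, zero_smul, (show det (0 : Matrix (Fin n) (Fin n) ℝ) = 0 by
      haveI : Nonempty (Fin n) := Fin.pos_iff_nonempty.mp (by omega); exact Matrix.det_zero)] at this
    exact hdM (by
      rcases mul_eq_zero.mp this with h | h
      · exact h
      · exact absurd h hdN)
  -- pass to ℂ
  refine ⟨(c0 : ℂ), by exact_mod_cast hc0, ?_, ?_⟩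
  · have hmapMN : (M.map (algebraMap ℝ ℂ)) * (N.map (algebraMap ℝ ℂ)) = (c0 : ℂ) • 1 := by
      rw [← Matrix.map_mul, hMN]
      ext i j
      simp only [Matrix.map_apply, Matrix.smul_apply, Matrix.one_apply, smul_eq_mul]
      split <;> simp
    have hdMc : (M.map (algebraMap ℝ ℂ)).det ≠ 0 := by
      have hh : (M.map (algebraMap ℝ ℂ)).det = algebraMap ℝ ℂ M.det :=
        (RingHom.map_det (algebraMap ℝ ℂ) M).symm
      rw [hh]
      simpa using hdM
    have := my_roots_aux (M.map (algebraMap ℝ ℂ)) (N.map (algebraMap ℝ ℂ)) (c0 : ℂ) hmapMN hdMc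
    rwa [Matrix.charpoly_map, Matrix.charpoly_map] at this
  · exact my_coeff_aux N M c0 hc0 hNM hdN
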